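/- The Wick product f ⋆ g := Σ_{k≥0} (−ħ)^k/k! · Σ_{i₁,...,i_k} (∂^k f/∂z_{i₁}⋯∂z_{i_k}) · (∂^k g/∂z̄_{i₁}⋯∂z̄_{i_k}) defines an associative product on the formal power series ring ℂ[[z¹, z̄¹, ..., z^n, z̄^n]][[ħ]]. -/

import Mathlib

set_option maxHeartbeats 1000000
set_option synthInstance.maxHeartbeats 400000

/-- `A n = ℂ[[z¹, z̄¹, ..., zⁿ, z̄ⁿ]]`: formal power series in the variables `z` (indexed by
`Sum.inl`) and `z̄` (indexed by `Sum.inr`). -/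
abbrev A (n : ℕ) := MvPowerSeries (Fin n ⊕ Fin n) ℂ

/-- `W n = ℂ[[z¹, z̄¹, ..., zⁿ, z̄ⁿ]][[ħ]]`, the formal Weyl space. -/
abbrev W (n : ℕ) := PowerSeries (A n)

/-- Formal partial derivative with respect to the variable `v`. -/
noncomputable def pd {n : ℕ} (v : Fin n ⊕ Fin n) (f : A n) : A n :=
  fun m => ((m v : ℕ) + 1 : ℂ) * f (m + Finsupp.single v 1)

/-- Iterated derivative `∂_{z_{i₁}}⋯∂_{z_{i_k}}` along a tuple of indices. -/
noncomputable def dzs {n k : ℕ} (i : Fin k → Fin n) (f : A n) : A n :=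
  (List.ofFn i).foldl (fun acc v => pd (Sum.inl v) acc) f

/-- Iterated derivative `∂_{z̄_{i₁}}⋯∂_{z̄_{i_k}}` along a tuple of indices. -/
noncomputable def dzbars {n k : ℕ} (i : Fin k → Fin n) (f : A n) : A n :=
  (List.ofFn i).foldl (fun acc v => pd (Sum.inr v) acc) f

/-- The Wick product
`f ⋆ g = Σ_{k≥0} ((−ħ)^k/k!) Σ_{i₁,...,i_k} (∂_{z_{i₁}}⋯∂_{z_{i_k}} f)(∂_{z̄_{i₁}}⋯∂_{z̄_{i_k}} g)`,
written out coefficientwise in the formal variable ħ (each ħ-coefficient is a finite sum). -/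
noncomputable def wick {n : ℕ} (f g : W n) : W n :=
  PowerSeries.mk fun N =>
    ∑ k ∈ Finset.range (N + 1), ∑ p ∈ Finset.range (N - k + 1),
      (((-1 : ℂ) ^ k * (k.factorial : ℂ)⁻¹) •
        ∑ i : Fin k → Fin n,
          dzs i (PowerSeries.coeff (R := A n) p f) *
            dzbars i (PowerSeries.coeff (R := A n) (N - k - p) g))

namespace WickProof

open TensorProduct LinearMap

variable {n : ℕ}

lemma apply_add (f g : A n) (m : Fin n ⊕ Fin n →₀ ℕ) : (f + g) m = f m + g m := rfl
lemma apply_smul (c : ℂ) (f : A n) (m : Fin n ⊕ Fin n →₀ ℕ) : (c • f) m = c * f m := rfl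

noncomputable def pdL (v : Fin n ⊕ Fin n) : A n →ₗ[ℂ] A n where
  toFun := pd v
  map_add' f g := by funext m; simp [pd, apply_add]; ring
  map_smul' c f := by funext m; simp [pd, apply_add, apply_smul]; ring

@[simp] lemma pdL_apply (v : Fin n ⊕ Fin n) (f : A n) : pdL v f = pd v f := rfl

lemma pd_comm' (u v : Fin n ⊕ Fin n) (f : A n) : pd u (pd v f) = pd v (pd u f) := by
  funext m
  simp only [pd, Finsupp.add_apply, Finsupp.single_apply]
  rw [add_assoc, add_comm (Finsupp.single u 1) (Finsupp.single v 1), ← add_assoc]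
  by_cases h : u = v
  · subst h; ring
  · have h' : v ≠ u := fun e => h e.symm
    simp only [h, h', if_false]; ring

lemma pd_mul' (v : Fin n ⊕ Fin n) (f g : A n) :
    pd v (f * g) = pd v f * g + f * pd v g := by
  classical
  funext m
  set δ : (Fin n ⊕ Fin n) →₀ ℕ := Finsupp.single v 1 with hδ
  have hmul : ∀ (a b : A n) (d : (Fin n ⊕ Fin n) →₀ ℕ),
      (a * b) d = ∑ x ∈ Finset.HasAntidiagonal.antidiagonal d, a x.1 * b x.2 := by
    intro a b d
    simpa [MvPowerSeries.coeff_apply] using MvPowerSeries.coeff_mul d a b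
  have S1 : ∑ y ∈ Finset.HasAntidiagonal.antidiagonal (m + δ), ((y.1 v : ℂ)) * (f y.1 * g y.2)
      = ∑ x ∈ Finset.HasAntidiagonal.antidiagonal m, (((x.1 v : ℕ) + 1 : ℂ)) * (f (x.1 + δ) * g x.2) := by
    rw [← Finset.sum_filter_of_ne (p := fun y => y.1 v ≠ 0)
      (by intro y _ hy h0; exact hy (by simp [h0]))]
    refine Finset.sum_nbij' (fun y => (y.1 - δ, y.2)) (fun x => (x.1 + δ, x.2)) ?_ ?_ ?_ ?_ ?_
    · intro y hy
      simp only [Finset.mem_filter, Finset.HasAntidiagonal.mem_antidiagonal] at hy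
      have hle : δ ≤ y.1 := by
        rw [hδ, Finsupp.single_le_iff]; omega
      have hc : y.1 - δ + δ = y.1 := tsub_add_cancel_of_le hle
      rw [Finset.HasAntidiagonal.mem_antidiagonal]
      have : (y.1 - δ + y.2) + δ = m + δ := by
        rw [add_right_comm, hc, hy.1]
      exact add_right_cancel this
    · intro x hx
      simp only [Finset.HasAntidiagonal.mem_antidiagonal] at hx
      simp only [Finset.mem_filter, Finset.HasAntidiagonal.mem_antidiagonal]
      constructor
      · rw [add_right_comm, hx]
      · simp [hδ, Finsupp.add_apply, Finsupp.single_apply]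
    · intro y hy
      simp only [Finset.mem_filter, Finset.HasAntidiagonal.mem_antidiagonal] at hy
      have hle : δ ≤ y.1 := by rw [hδ, Finsupp.single_le_iff]; omega
      simp [tsub_add_cancel_of_le hle]
    · intro x hx; simp
    · intro y hy
      simp only [Finset.mem_filter, Finset.HasAntidiagonal.mem_antidiagonal] at hy
      have hle : δ ≤ y.1 := by rw [hδ, Finsupp.single_le_iff]; omega
      have hc : y.1 - δ + δ = y.1 := tsub_add_cancel_of_le hle
      have h1 : (y.1 - δ) v = y.1 v - 1 := by
        rw [Finsupp.tsub_apply, hδ, Finsupp.single_apply]; simp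
      rw [hc, h1]
      congr 1
      rw [Nat.cast_sub (by omega : 1 ≤ y.1 v)]
      push_cast
      ring
  have S2 : ∑ y ∈ Finset.HasAntidiagonal.antidiagonal (m + δ), ((y.2 v : ℂ)) * (f y.1 * g y.2)
      = ∑ x ∈ Finset.HasAntidiagonal.antidiagonal m, (((x.2 v : ℕ) + 1 : ℂ)) * (f x.1 * g (x.2 + δ)) := by
    rw [← Finset.sum_filter_of_ne (p := fun y => y.2 v ≠ 0)
      (by intro y _ hy h0; exact hy (by simp [h0]))]
    refine Finset.sum_nbij' (fun y => (y.1, y.2 - δ)) (fun x => (x.1, x.2 + δ)) ?_ ?_ ?_ ?_ ?_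
    · intro y hy
      simp only [Finset.mem_filter, Finset.HasAntidiagonal.mem_antidiagonal] at hy
      have hle : δ ≤ y.2 := by rw [hδ, Finsupp.single_le_iff]; omega
      have hc : y.2 - δ + δ = y.2 := tsub_add_cancel_of_le hle
      rw [Finset.HasAntidiagonal.mem_antidiagonal]
      have : (y.1 + (y.2 - δ)) + δ = m + δ := by
        rw [add_assoc, hc, hy.1]
      exact add_right_cancel this
    · intro x hx
      simp only [Finset.HasAntidiagonal.mem_antidiagonal] at hx
      simp only [Finset.mem_filter, Finset.HasAntidiagonal.mem_antidiagonal]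
      refine ⟨by rw [← add_assoc, hx], ?_⟩
      simp [hδ, Finsupp.add_apply, Finsupp.single_apply]
    · intro y hy
      simp only [Finset.mem_filter, Finset.HasAntidiagonal.mem_antidiagonal] at hy
      have hle : δ ≤ y.2 := by rw [hδ, Finsupp.single_le_iff]; omega
      simp [tsub_add_cancel_of_le hle]
    · intro x hx; simp
    · intro y hy
      simp only [Finset.mem_filter, Finset.HasAntidiagonal.mem_antidiagonal] at hy
      have hle : δ ≤ y.2 := by rw [hδ, Finsupp.single_le_iff]; omega
      have hc : y.2 - δ + δ = y.2 := tsub_add_cancel_of_le hle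
      have h1 : (y.2 - δ) v = y.2 v - 1 := by
        rw [Finsupp.tsub_apply, hδ, Finsupp.single_apply]; simp
      rw [hc, h1]
      congr 1
      rw [Nat.cast_sub (by omega : 1 ≤ y.2 v)]
      push_cast
      ring
  have expand : (pd v f * g + f * pd v g) m
      = (∑ x ∈ Finset.HasAntidiagonal.antidiagonal m, (((x.1 v : ℕ) + 1 : ℂ)) * (f (x.1 + δ) * g x.2))
        + ∑ x ∈ Finset.HasAntidiagonal.antidiagonal m, (((x.2 v : ℕ) + 1 : ℂ)) * (f x.1 * g (x.2 + δ)) := by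
    rw [apply_add, hmul, hmul]
    congr 1 <;> (apply Finset.sum_congr rfl; intro x _; simp only [pd]; ring)
  rw [expand, ← S1, ← S2, ← Finset.sum_add_distrib]
  rw [show pd v (f * g) m = (((m v : ℕ) : ℂ) + 1) * ((f * g) (m + δ)) from rfl, hmul,
    Finset.mul_sum]
  apply Finset.sum_congr rfl
  intro y hy
  rw [Finset.HasAntidiagonal.mem_antidiagonal] at hy
  have hv : y.1 v + y.2 v = m v + 1 := by
    have := congrArg (fun t => t v) hy
    simpa [Finsupp.add_apply, hδ, Finsupp.single_apply] using this
  have hc : ((y.1 v : ℂ)) + (y.2 v : ℂ) = ((m v : ℕ) : ℂ) + 1 := by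
    exact_mod_cast congrArg (Nat.cast (R := ℂ)) hv
  rw [← hc]
  ring

noncomputable def mul2 : A n ⊗[ℂ] A n →ₗ[ℂ] A n := LinearMap.mul' ℂ (A n)

@[simp] lemma mul2_tmul (x y : A n) : mul2 (x ⊗ₜ[ℂ] y) = x * y := LinearMap.mul'_apply

noncomputable def Del : A n ⊗[ℂ] A n →ₗ[ℂ] A n ⊗[ℂ] A n :=
  ∑ j : Fin n, TensorProduct.map (pdL (Sum.inl j)) (pdL (Sum.inr j))

lemma Del_tmul (x y : A n) :
    Del (x ⊗ₜ[ℂ] y) = ∑ j : Fin n, pd (Sum.inl j) x ⊗ₜ[ℂ] pd (Sum.inr j) y := by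
  simp [Del, LinearMap.sum_apply]

noncomputable def W2 (k : ℕ) (x y : A n) : A n := mul2 ((Del ^ k) (x ⊗ₜ[ℂ] y))

lemma dzs_cons {k : ℕ} (j : Fin n) (i : Fin k → Fin n) (x : A n) :
    dzs (Fin.cons j i) x = dzs i (pd (Sum.inl j) x) := by
  simp [dzs, List.ofFn_succ]

lemma dzbars_cons {k : ℕ} (j : Fin n) (i : Fin k → Fin n) (x : A n) :
    dzbars (Fin.cons j i) x = dzbars i (pd (Sum.inr j) x) := by
  simp [dzbars, List.ofFn_succ]

lemma sum_dz (k : ℕ) (x y : A n) :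
    ∑ i : Fin k → Fin n, dzs i x * dzbars i y = W2 k x y := by
  induction k generalizing x y with
  | zero =>
    have : W2 0 x y = x * y := by simp [W2]
    rw [this]
    simp [dzs, dzbars, List.ofFn_zero]
  | succ k ih =>
    have h1 : W2 (k+1) x y = ∑ j : Fin n, W2 k (pd (Sum.inl j) x) (pd (Sum.inr j) y) := by
      simp only [W2, pow_succ, Module.End.mul_apply, Del_tmul, map_sum]
    rw [h1]
    rw [← Equiv.sum_comp (Fin.consEquiv (fun _ : Fin (k+1) => Fin n))
      (fun i => dzs i x * dzbars i y)]
    rw [Fintype.sum_prod_type]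
    refine Finset.sum_congr rfl fun j _ => ?_
    rw [← ih]
    refine Finset.sum_congr rfl fun i _ => ?_
    rw [show (Fin.consEquiv (fun _ : Fin (k+1) => Fin n)) (j, i) = Fin.cons j i from rfl,
      dzs_cons, dzbars_cons]

noncomputable abbrev T3 (n : ℕ) := (A n ⊗[ℂ] A n) ⊗[ℂ] A n

noncomputable def D13 : T3 n →ₗ[ℂ] T3 n :=
  ∑ j : Fin n, TensorProduct.map (TensorProduct.map (pdL (Sum.inl j)) LinearMap.id) (pdL (Sum.inr j))

noncomputable def D23 : T3 n →ₗ[ℂ] T3 n :=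
  ∑ j : Fin n, TensorProduct.map (TensorProduct.map LinearMap.id (pdL (Sum.inl j))) (pdL (Sum.inr j))

noncomputable def D12 : T3 n →ₗ[ℂ] T3 n := Del.rTensor (A n)

lemma D13_tmul (x y z : A n) : D13 ((x ⊗ₜ[ℂ] y) ⊗ₜ[ℂ] z)
    = ∑ j : Fin n, (pd (Sum.inl j) x ⊗ₜ[ℂ] y) ⊗ₜ[ℂ] pd (Sum.inr j) z := by
  simp [D13, LinearMap.sum_apply]

lemma D23_tmul (x y z : A n) : D23 ((x ⊗ₜ[ℂ] y) ⊗ₜ[ℂ] z)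
    = ∑ j : Fin n, (x ⊗ₜ[ℂ] pd (Sum.inl j) y) ⊗ₜ[ℂ] pd (Sum.inr j) z := by
  simp [D23, LinearMap.sum_apply]

lemma D12_tmul (x y z : A n) : D12 ((x ⊗ₜ[ℂ] y) ⊗ₜ[ℂ] z)
    = ∑ j : Fin n, (pd (Sum.inl j) x ⊗ₜ[ℂ] pd (Sum.inr j) y) ⊗ₜ[ℂ] z := by
  simp [D12, Del, LinearMap.sum_apply, rTensor_tmul, TensorProduct.sum_tmul]

lemma comm1323 : Commute (D13 (n := n)) D23 := by
  show _ = _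
  refine TensorProduct.ext_threefold fun x y z => ?_
  simp only [Module.End.mul_apply, D13_tmul, D23_tmul, map_sum, Finset.sum_congr]
  rw [Finset.sum_comm]
  refine Finset.sum_congr rfl fun j _ => Finset.sum_congr rfl fun j' _ => ?_
  rw [pd_comm']

lemma comm1213 : Commute (D12 (n := n)) D13 := by
  show _ = _
  refine TensorProduct.ext_threefold fun x y z => ?_
  simp only [Module.End.mul_apply, D12_tmul, D13_tmul, map_sum, Finset.sum_congr]
  rw [Finset.sum_comm]
  refine Finset.sum_congr rfl fun j _ => Finset.sum_congr rfl fun j' _ => ?_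
  rw [pd_comm']

lemma comm1223 : Commute (D12 (n := n)) D23 := by
  show _ = _
  refine TensorProduct.ext_threefold fun x y z => ?_
  simp only [Module.End.mul_apply, D12_tmul, D23_tmul, map_sum, Finset.sum_congr]
  rw [Finset.sum_comm]
  refine Finset.sum_congr rfl fun j _ => Finset.sum_congr rfl fun j' _ => ?_
  rw [pd_comm']

noncomputable def mul3 : T3 n →ₗ[ℂ] A n := mul2 ∘ₗ mul2.rTensor (A n)

lemma mul3_tmul (x y z : A n) : mul3 ((x ⊗ₜ[ℂ] y) ⊗ₜ[ℂ] z) = x * y * z := by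
  simp [mul3, rTensor_tmul]

noncomputable def mul23 : T3 n →ₗ[ℂ] A n ⊗[ℂ] A n :=
  mul2.lTensor (A n) ∘ₗ (TensorProduct.assoc ℂ (A n) (A n) (A n)).toLinearMap

lemma mul23_tmul (x y z : A n) : mul23 ((x ⊗ₜ[ℂ] y) ⊗ₜ[ℂ] z) = x ⊗ₜ[ℂ] (y * z) := by
  simp [mul23, assoc_tmul, lTensor_tmul]

lemma mul2_mul23 : mul2 ∘ₗ mul23 = mul3 (n := n) := by
  refine TensorProduct.ext_threefold fun x y z => ?_
  simp [mul23_tmul, mul3_tmul, mul_assoc]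

lemma conj_pow {M N : Type*} [AddCommMonoid M] [Module ℂ M] [AddCommMonoid N] [Module ℂ N]
    (φ : M →ₗ[ℂ] M) (ψ : M →ₗ[ℂ] N) (χ : N →ₗ[ℂ] N) (hc : ψ ∘ₗ φ = χ ∘ₗ ψ) (k : ℕ) :
    ψ ∘ₗ (φ ^ k) = (χ ^ k) ∘ₗ ψ := by
  induction k with
  | zero => simp [pow_zero, Module.End.one_eq_id, LinearMap.id_comp, LinearMap.comp_id]
  | succ k ih =>
    rw [pow_succ, pow_succ, Module.End.mul_eq_comp, Module.End.mul_eq_comp,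
      ← LinearMap.comp_assoc, ih, LinearMap.comp_assoc, hc, ← LinearMap.comp_assoc]

lemma leibniz_r : Del ∘ₗ mul2.rTensor (A n) = mul2.rTensor (A n) ∘ₗ (D13 + D23) := by
  refine TensorProduct.ext_threefold fun x y z => ?_
  simp only [LinearMap.comp_apply, rTensor_tmul, mul2_tmul, Del_tmul, LinearMap.add_apply,
    D13_tmul, D23_tmul, map_add, map_sum, pd_mul', add_tmul, Finset.sum_add_distrib]

lemma leibniz_l : Del ∘ₗ (mul23 (n := n)) = mul23 ∘ₗ (D12 + D13) := by
  refine TensorProduct.ext_threefold fun x y z => ?_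
  simp only [LinearMap.comp_apply, mul23_tmul, Del_tmul, LinearMap.add_apply,
    D12_tmul, D13_tmul, map_add, map_sum, pd_mul', tmul_add, Finset.sum_add_distrib]

lemma assoc_D23 : (TensorProduct.assoc ℂ (A n) (A n) (A n)).toLinearMap ∘ₗ D23
    = Del.lTensor (A n) ∘ₗ (TensorProduct.assoc ℂ (A n) (A n) (A n)).toLinearMap := by
  refine TensorProduct.ext_threefold fun x y z => ?_
  simp [LinearMap.comp_apply, D23_tmul, map_sum, assoc_tmul, lTensor_tmul, Del_tmul,
    tmul_sum, LinearEquiv.coe_coe]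

noncomputable def M3 (α β γ : ℕ) (x y z : A n) : A n :=
  mul3 ((D13 ^ α) ((D23 ^ β) ((D12 ^ γ) ((x ⊗ₜ[ℂ] y) ⊗ₜ[ℂ] z))))

lemma ID_L (a b : ℕ) (x y z : A n) :
    W2 a (W2 b x y) z = ∑ s ∈ Finset.range (a + 1), a.choose s • M3 s (a - s) b x y z := by
  have hD12pow : (D12 : T3 n →ₗ[ℂ] T3 n) ^ b = (Del ^ b).rTensor (A n) := by
    rw [D12, LinearMap.rTensor_pow]
  have e1 : (W2 b x y) ⊗ₜ[ℂ] z = mul2.rTensor (A n) ((D12 ^ b) ((x ⊗ₜ[ℂ] y) ⊗ₜ[ℂ] z)) := by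
    rw [hD12pow, rTensor_tmul, rTensor_tmul, W2]
  have e2 : ∀ t : T3 n, (Del ^ a) (mul2.rTensor (A n) t)
      = mul2.rTensor (A n) (((D13 + D23 : Module.End ℂ (T3 n)) ^ a) t) := by
    intro t
    have h := LinearMap.congr_fun
      (conj_pow (D13 + D23) (mul2.rTensor (A n)) Del leibniz_r.symm a) t
    simpa only [LinearMap.comp_apply] using h.symm
  rw [W2, e1, e2, Commute.add_pow comm1323]
  simp only [LinearMap.sum_apply, map_sum]
  refine Finset.sum_congr rfl fun s _ => ?_
  simp only [M3, mul3, Module.End.mul_apply, Module.End.natCast_apply, map_nsmul,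
    LinearMap.comp_apply]

lemma ID_R (a b : ℕ) (x y z : A n) :
    W2 a x (W2 b y z) = ∑ s ∈ Finset.range (a + 1), a.choose s • M3 (a - s) b s x y z := by
  have h1 : (TensorProduct.assoc ℂ (A n) (A n) (A n)).toLinearMap ∘ₗ ((D23 : T3 n →ₗ[ℂ] T3 n) ^ b)
      = (Del ^ b).lTensor (A n) ∘ₗ (TensorProduct.assoc ℂ (A n) (A n) (A n)).toLinearMap := by
    rw [conj_pow _ _ _ assoc_D23 b, LinearMap.lTensor_pow]
  have e1 : x ⊗ₜ[ℂ] (W2 b y z) = mul23 ((D23 ^ b) ((x ⊗ₜ[ℂ] y) ⊗ₜ[ℂ] z)) := by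
    have h2 := LinearMap.congr_fun h1 ((x ⊗ₜ[ℂ] y) ⊗ₜ[ℂ] z)
    simp only [LinearMap.comp_apply] at h2
    rw [mul23, LinearMap.comp_apply, h2, LinearEquiv.coe_coe, assoc_tmul, lTensor_tmul,
      lTensor_tmul, W2]
  have e2 : ∀ t : T3 n, (Del ^ a) (mul23 t)
      = mul23 (((D12 + D13 : Module.End ℂ (T3 n)) ^ a) t) := by
    intro t
    have h := LinearMap.congr_fun
      (conj_pow (D12 + D13) mul23 Del leibniz_l.symm a) t
    simpa only [LinearMap.comp_apply] using h.symm
  have hmul3 : ∀ t : T3 n, mul2 (mul23 t) = mul3 t := fun t =>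
    LinearMap.congr_fun mul2_mul23 t
  rw [W2, e1, e2, Commute.add_pow comm1213]
  simp only [LinearMap.sum_apply, map_sum, hmul3]
  refine Finset.sum_congr rfl fun s _ => ?_
  have reorder : (D12 : T3 n →ₗ[ℂ] T3 n) ^ s * D13 ^ (a - s) * D23 ^ b
      = D13 ^ (a - s) * (D23 ^ b * D12 ^ s) := by
    have c1 : Commute ((D12 : T3 n →ₗ[ℂ] T3 n) ^ s) (D13 ^ (a - s)) :=
      comm1213.pow_pow s (a - s)
    have c2 : Commute ((D12 : T3 n →ₗ[ℂ] T3 n) ^ s) (D23 ^ b) := comm1223.pow_pow s b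
    rw [mul_assoc, (c1.mul_right c2).eq, mul_assoc]
  have h4 := LinearMap.congr_fun reorder ((x ⊗ₜ[ℂ] y) ⊗ₜ[ℂ] z)
  simp only [Module.End.mul_apply] at h4
  simp only [Module.End.mul_apply, Module.End.natCast_apply, map_nsmul]
  rw [h4, M3]

/-- The coefficient `(-1)^k/k!`. -/
noncomputable def c (k : ℕ) : ℂ := (-1 : ℂ) ^ k * (k.factorial : ℂ)⁻¹

lemma c_mul_choose {a s : ℕ} (hs : s ≤ a) : c a * (a.choose s : ℂ) = c s * c (a - s) := by
  have h := Nat.choose_mul_factorial_mul_factorial hs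
  have key : (a.choose s : ℂ) * (s.factorial : ℂ) * ((a - s).factorial : ℂ)
      = (a.factorial : ℂ) := by exact_mod_cast congrArg (Nat.cast (R := ℂ)) h
  have hsign : ((-1 : ℂ)) ^ a = (-1) ^ s * (-1) ^ (a - s) := by
    rw [← pow_add, Nat.add_sub_cancel' hs]
  have hfa : (a.factorial : ℂ) ≠ 0 := Nat.cast_ne_zero.2 (Nat.factorial_ne_zero a)
  have hfs : (s.factorial : ℂ) ≠ 0 := Nat.cast_ne_zero.2 (Nat.factorial_ne_zero s)
  have hft : ((a - s).factorial : ℂ) ≠ 0 := Nat.cast_ne_zero.2 (Nat.factorial_ne_zero _)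
  simp only [c, hsign]
  field_simp
  linear_combination key

lemma W2_sum₁ {ι : Type*} (k : ℕ) (s : Finset ι) (F : ι → A n) (y : A n) :
    W2 k (∑ i ∈ s, F i) y = ∑ i ∈ s, W2 k (F i) y := by
  simp [W2, TensorProduct.sum_tmul, map_sum]

lemma W2_sum₂ {ι : Type*} (k : ℕ) (s : Finset ι) (x : A n) (F : ι → A n) :
    W2 k x (∑ i ∈ s, F i) = ∑ i ∈ s, W2 k x (F i) := by
  simp [W2, TensorProduct.tmul_sum, map_sum]

lemma W2_smul₁ (k : ℕ) (a : ℂ) (x y : A n) : W2 k (a • x) y = a • W2 k x y := by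
  simp only [W2]
  rw [← TensorProduct.smul_tmul', map_smul, map_smul]

lemma W2_smul₂ (k : ℕ) (a : ℂ) (x y : A n) : W2 k x (a • y) = a • W2 k x y := by
  simp [W2, TensorProduct.tmul_smul, map_smul]

lemma coeff_wick (f g : W n) (N : ℕ) :
    PowerSeries.coeff (R := A n) N (wick f g)
      = ∑ k ∈ Finset.range (N + 1), ∑ p ∈ Finset.range (N - k + 1),
          c k • W2 k (PowerSeries.coeff (R := A n) p f) (PowerSeries.coeff (R := A n) (N - k - p) g) := by
  rw [wick, PowerSeries.coeff_mk]
  refine Finset.sum_congr rfl fun k _ => Finset.sum_congr rfl fun p _ => ?_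
  rw [sum_dz, c]

end WickProof

open WickProof in
/-- the Wick product defines an associative product on
`ℂ[[z¹, z̄¹, ..., zⁿ, z̄ⁿ]][[ħ]]`. -/
theorem stmt_3 (n : ℕ) (f g h : W n) :
    wick (wick f g) h = wick f (wick g h) := by
  classical
  apply PowerSeries.ext
  intro N
  set F := fun p => PowerSeries.coeff (R := A n) p f with hF
  set G := fun p => PowerSeries.coeff (R := A n) p g with hG
  set H := fun p => PowerSeries.coeff (R := A n) p h with hH
  have hL : PowerSeries.coeff (R := A n) N (wick (wick f g) h)
      = ∑ a ∈ Finset.range (N + 1), ∑ u ∈ Finset.range (N - a + 1),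
          ∑ b ∈ Finset.range (u + 1), ∑ p ∈ Finset.range (u - b + 1),
            ∑ s ∈ Finset.range (a + 1),
              (c s * c (a - s) * c b) •
                M3 s (a - s) b (F p) (G (u - b - p)) (H (N - a - u)) := by
    rw [coeff_wick]
    refine Finset.sum_congr rfl fun a _ => Finset.sum_congr rfl fun u _ => ?_
    rw [coeff_wick, W2_sum₁, Finset.smul_sum]
    refine Finset.sum_congr rfl fun b _ => ?_
    rw [W2_sum₁, Finset.smul_sum]
    refine Finset.sum_congr rfl fun p _ => ?_
    rw [W2_smul₁, smul_smul, ID_L, Finset.smul_sum]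
    refine Finset.sum_congr rfl fun s hs => ?_
    rw [← Nat.cast_smul_eq_nsmul ℂ, smul_smul]
    congr 1
    rw [mul_right_comm, c_mul_choose (Finset.mem_range_succ_iff.mp hs)]
  have hR : PowerSeries.coeff (R := A n) N (wick f (wick g h))
      = ∑ a ∈ Finset.range (N + 1), ∑ u ∈ Finset.range (N - a + 1),
          ∑ b ∈ Finset.range (N - a - u + 1), ∑ q ∈ Finset.range (N - a - u - b + 1),
            ∑ s ∈ Finset.range (a + 1),
              (c s * c (a - s) * c b) •
                M3 (a - s) b s (F u) (G q) (H (N - a - u - b - q)) := by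
    rw [coeff_wick]
    refine Finset.sum_congr rfl fun a _ => Finset.sum_congr rfl fun u _ => ?_
    rw [coeff_wick, W2_sum₂, Finset.smul_sum]
    refine Finset.sum_congr rfl fun b _ => ?_
    rw [W2_sum₂, Finset.smul_sum]
    refine Finset.sum_congr rfl fun q _ => ?_
    rw [W2_smul₂, smul_smul, ID_R, Finset.smul_sum]
    refine Finset.sum_congr rfl fun s hs => ?_
    rw [← Nat.cast_smul_eq_nsmul ℂ, smul_smul]
    congr 1
    rw [mul_right_comm, c_mul_choose (Finset.mem_range_succ_iff.mp hs)]
  rw [hL, hR]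
  simp only [Finset.sum_sigma']
  refine Finset.sum_nbij'
    (fun x => (⟨x.2.2.2.2 + x.2.2.1, x.2.2.2.1, x.1 - x.2.2.2.2,
      x.2.1 - x.2.2.1 - x.2.2.2.1, x.2.2.1⟩ : Σ _ : ℕ, Σ _ : ℕ, Σ _ : ℕ, Σ _ : ℕ, ℕ))
    (fun y => (⟨y.2.2.1 + (y.1 - y.2.2.2.2), y.2.2.2.2 + y.2.1 + y.2.2.2.1,
      y.2.2.2.2, y.2.1, y.1 - y.2.2.2.2⟩ : Σ _ : ℕ, Σ _ : ℕ, Σ _ : ℕ, Σ _ : ℕ, ℕ))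
    ?_ ?_ ?_ ?_ ?_
  · rintro ⟨a, u, b, p, s⟩ hx
    simp only [Finset.mem_sigma, Finset.mem_range] at hx
    dsimp only
    simp only [Finset.mem_sigma, Finset.mem_range]
    omega
  · rintro ⟨a, u, b, q, s⟩ hx
    simp only [Finset.mem_sigma, Finset.mem_range] at hx
    dsimp only
    simp only [Finset.mem_sigma, Finset.mem_range]
    omega
  · rintro ⟨a, u, b, p, s⟩ hx
    simp only [Finset.mem_sigma, Finset.mem_range] at hx
    dsimp only
    simp only [Sigma.ext_iff, heq_eq_eq, true_and, and_true]
    omega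
  · rintro ⟨a, u, b, q, s⟩ hx
    simp only [Finset.mem_sigma, Finset.mem_range] at hx
    dsimp only
    simp only [Sigma.ext_iff, heq_eq_eq, true_and, and_true]
    omega
  · rintro ⟨a, u, b, p, s⟩ hx
    simp only [Finset.mem_sigma, Finset.mem_range] at hx
    dsimp only
    obtain ⟨ha, hu, hb, hp, hs⟩ := hx
    have e1 : s + b - b = s := by omega
    have e2 : N - (s + b) - p - (a - s) - (u - b - p) = N - a - u := by omega
    simp only [e1, e2]
    rw [show c b * c s * c (a - s) = c s * c (a - s) * c b from by ring]
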